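/- Let X, Y be independent exponential random variables with means λ_a and λ_b, let P_b be uniform on [0, P] independent of X, Y, and let μ, φ, σ² > 0. Then P( X < μ(φ·P_b·Y + σ²) ) = 1 − λ_a · e^{−μσ²/λ_a} · ( ln(μφλ_b P + λ_a) − ln λ_a ) / ( μφλ_b P ). -/

import Mathlib

open MeasureTheory ProbabilityTheory Set

lemma aux_exp_integral {b : ℝ} (hb : 0 < b) :
    ∫ y in Ioi (0:ℝ), Real.exp (-(b*y)) = 1 / b := by
  have hderiv : ∀ x ∈ Ici (0:ℝ),
      HasDerivAt (fun y => -(1/b) * Real.exp (-(b*y))) (Real.exp (-(b*x))) x := by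
    intro x _
    have h1 : HasDerivAt (fun y : ℝ => -(b*y)) (-b) x := by
      simpa [Pi.neg_def] using ((hasDerivAt_id x).const_mul b).neg
    have h2 := (h1.exp).const_mul (-(1/b))
    convert h2 using 1
    · rfl
    · rfl
    · field_simp
  have hint : IntegrableOn (fun y => Real.exp (-(b*y))) (Ioi (0:ℝ)) := by
    simpa only [neg_mul] using exp_neg_integrableOn_Ioi 0 hb
  have htend : Filter.Tendsto (fun y => -(1/b) * Real.exp (-(b*y))) Filter.atTop (nhds 0) := by
    have h0 : Filter.Tendsto (fun y : ℝ => b * y) Filter.atTop Filter.atTop :=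
      Filter.Tendsto.const_mul_atTop hb Filter.tendsto_id
    have := (Real.tendsto_exp_neg_atTop_nhds_zero.comp h0).const_mul (-(1/b))
    simpa using this
  have := integral_Ioi_of_hasDerivAt_of_tendsto' hderiv hint htend
  rw [this]
  norm_num

lemma expMeasure_Iio {r : ℝ} (hr : 0 < r) (t : ℝ) :
    expMeasure r (Iio t) = ENNReal.ofReal (if 0 ≤ t then 1 - Real.exp (-(r*t)) else 0) := by
  rw [expMeasure, gammaMeasure, withDensity_apply _ measurableSet_Iio]
  rw [setLIntegral_congr Iio_ae_eq_Iic]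
  exact lintegral_exponentialPDF_eq_antiDeriv hr t

lemma lint_exp (lamb A c : ℝ) (hlamb : 0 < lamb) (hA1 : A ≤ 1) (hc : 0 ≤ c) :
    ∫⁻ y, ENNReal.ofReal (if 0 ≤ y then 1 - A * Real.exp (-(c*y)) else 0)
        ∂(expMeasure (1/lamb))
      = ENNReal.ofReal (1 - A / (1 + c * lamb)) := by
  set r : ℝ := 1/lamb with hr
  have hrpos : 0 < r := by positivity
  have hmeas : Measurable fun y : ℝ =>
      ENNReal.ofReal (if 0 ≤ y then 1 - A * Real.exp (-(c*y)) else 0) := by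
    apply Measurable.ennreal_ofReal
    apply Measurable.ite measurableSet_Ici _ measurable_const
    fun_prop
  rw [expMeasure, gammaMeasure,
    lintegral_withDensity_eq_lintegral_mul (f := gammaPDF 1 r) _
      ((measurable_gammaPDFReal 1 r).ennreal_ofReal) hmeas]
  have heq : ∀ y : ℝ, (gammaPDF 1 r * fun y =>
      ENNReal.ofReal (if 0 ≤ y then 1 - A * Real.exp (-(c*y)) else 0)) y
      = ENNReal.ofReal ((Ici (0:ℝ)).indicator
          (fun y => r * Real.exp (-(r*y)) - (r*A) * Real.exp (-((r+c)*y))) y) := by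
    intro y
    have hpdf : gammaPDF 1 r y = exponentialPDF r y := rfl
    simp only [Pi.mul_apply, hpdf, indicator_apply, mem_Ici]
    by_cases h : 0 ≤ y
    · rw [exponentialPDF_of_nonneg h, if_pos h, if_pos h,
        ← ENNReal.ofReal_mul (by positivity)]
      congr 1
      have hexp : Real.exp (-(r*y)) * Real.exp (-(c*y)) = Real.exp (-((r+c)*y)) := by
        rw [← Real.exp_add]; ring_nf
      rw [← hexp]; ring
    · rw [exponentialPDF_of_neg (lt_of_not_ge h), if_neg h, if_neg h, zero_mul,
        ENNReal.ofReal_zero]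
  rw [lintegral_congr heq]
  have hint1 : IntegrableOn (fun y => Real.exp (-(r*y))) (Ioi (0:ℝ)) := by
    simpa only [neg_mul] using exp_neg_integrableOn_Ioi 0 hrpos
  have hint2 : IntegrableOn (fun y => Real.exp (-((r+c)*y))) (Ioi (0:ℝ)) := by
    simpa only [neg_mul] using exp_neg_integrableOn_Ioi 0 (by positivity : (0:ℝ) < r + c)
  have hintF : IntegrableOn
      (fun y => r * Real.exp (-(r*y)) - (r*A) * Real.exp (-((r+c)*y))) (Ici (0:ℝ)) := by
    rw [integrableOn_Ici_iff_integrableOn_Ioi]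
    exact (hint1.const_mul r).sub (hint2.const_mul (r*A))
  have hintInd : Integrable ((Ici (0:ℝ)).indicator
      (fun y => r * Real.exp (-(r*y)) - (r*A) * Real.exp (-((r+c)*y)))) := by
    rw [integrable_indicator_iff measurableSet_Ici]
    exact hintF
  have hnn : 0 ≤ᵐ[volume] (Ici (0:ℝ)).indicator
      (fun y => r * Real.exp (-(r*y)) - (r*A) * Real.exp (-((r+c)*y))) := by
    refine Filter.Eventually.of_forall fun y => ?_
    apply indicator_nonneg
    intro y hy
    have h1 : A * Real.exp (-((r+c)*y)) ≤ Real.exp (-(r*y)) := by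
      calc A * Real.exp (-((r+c)*y)) ≤ 1 * Real.exp (-((r+c)*y)) := by
            apply mul_le_mul_of_nonneg_right hA1 (Real.exp_pos _).le
        _ = Real.exp (-((r+c)*y)) := one_mul _
        _ ≤ Real.exp (-(r*y)) := by
            apply Real.exp_le_exp.2
            nlinarith [mem_Ici.1 hy]
    nlinarith [hrpos]
  rw [← ofReal_integral_eq_lintegral_ofReal hintInd hnn]
  congr 1
  rw [integral_indicator measurableSet_Ici, integral_Ici_eq_integral_Ioi,
    integral_sub ((hint1.const_mul r)) (hint2.const_mul (r*A)),
    integral_const_mul, integral_const_mul, aux_exp_integral hrpos,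
    aux_exp_integral (by positivity : (0:ℝ) < r + c)]
  rw [hr]
  field_simp

lemma lint_unif (P lama K A : ℝ) (hP : 0 < P) (hlama : 0 < lama) (hK : 0 < K)
    (hA0 : 0 ≤ A) (hA1 : A ≤ 1) :
    (ENNReal.ofReal P)⁻¹ *
      ∫⁻ t in Icc (0:ℝ) P, ENNReal.ofReal (1 - A * lama / (lama + K * t))
      = ENNReal.ofReal (1 - lama * A * (Real.log (K*P + lama) - Real.log lama) / (K*P)) := by
  have hdenom : ∀ t : ℝ, t ∈ Icc (0:ℝ) P → 0 < lama + K * t := by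
    intro t ht
    nlinarith [ht.1]
  have hcont : ContinuousOn (fun t : ℝ => 1 - A * lama / (lama + K * t)) (Icc 0 P) := by
    apply ContinuousOn.sub continuousOn_const
    apply ContinuousOn.div continuousOn_const (by fun_prop)
    intro t ht
    exact (hdenom t ht).ne'
  have hint : IntegrableOn (fun t : ℝ => 1 - A * lama / (lama + K * t)) (Icc 0 P) :=
    hcont.integrableOn_Icc
  have hnn : 0 ≤ᵐ[volume.restrict (Icc (0:ℝ) P)] fun t : ℝ => 1 - A * lama / (lama + K * t) := by
    rw [Filter.EventuallyLE, ae_restrict_iff' measurableSet_Icc]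
    refine Filter.Eventually.of_forall fun t ht => ?_
    have h1 : A * lama / (lama + K * t) ≤ 1 := by
      rw [div_le_one (hdenom t ht)]
      nlinarith [ht.1]
    simp only [Pi.zero_apply]
    linarith
  rw [← ofReal_integral_eq_lintegral_ofReal hint hnn]
  have hfc : ∫ t in Icc (0:ℝ) P, (1 - A * lama / (lama + K * t))
      = P - (A * lama / K) * (Real.log (lama + K * P) - Real.log lama) := by
    rw [integral_Icc_eq_integral_Ioc, ← intervalIntegral.integral_of_le hP.le]
    have hderiv : ∀ t ∈ uIcc (0:ℝ) P,
        HasDerivAt (fun t : ℝ => t - (A * lama / K) * Real.log (lama + K * t))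
          (1 - A * lama / (lama + K * t)) t := by
      intro t ht
      rw [uIcc_of_le hP.le] at ht
      have hne : lama + K * t ≠ 0 := (hdenom t ht).ne'
      have h1 : HasDerivAt (fun t : ℝ => lama + K * t) K t := by
        simpa using ((hasDerivAt_id t).const_mul K).const_add lama
      have h3 := (hasDerivAt_id t).sub ((h1.log hne).const_mul (A * lama / K))
      convert h3 using 1
      · rfl
      · rfl
      · rfl
      · field_simp
    have hii : IntervalIntegrable (fun t : ℝ => 1 - A * lama / (lama + K * t)) volume 0 P := by
      apply ContinuousOn.intervalIntegrable
      rwa [uIcc_of_le hP.le]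
    rw [intervalIntegral.integral_eq_sub_of_hasDerivAt hderiv hii]
    simp only [mul_zero, add_zero, Real.log_zero]
    ring
  rw [hfc, ← ENNReal.ofReal_inv_of_pos hP, ← ENNReal.ofReal_mul (by positivity)]
  congr 1
  have h1 : Real.log (lama + K * P) = Real.log (K * P + lama) := by ring_nf
  rw [h1]
  field_simp

lemma expMeasure_ae_nonneg {r : ℝ} (hr : 0 < r) : ∀ᵐ y ∂(expMeasure r), 0 ≤ y := by
  rw [ae_iff]
  have : {y : ℝ | ¬ 0 ≤ y} = Iio 0 := by ext y; simp only [mem_setOf_eq, mem_Iio, not_le]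
  rw [this, expMeasure_Iio hr 0]
  simp

lemma inner_eval (lama lamb m phi σ2 pb : ℝ)
    (hlama : 0 < lama) (hlamb : 0 < lamb) (hm : 0 < m) (hphi : 0 < phi)
    (hσ2 : 0 < σ2) (hpb : 0 ≤ pb) :
    ∫⁻ y, ENNReal.ofReal (if 0 ≤ m * (phi * pb * y + σ2) then
        1 - Real.exp (-(1/lama * (m * (phi * pb * y + σ2)))) else 0)
      ∂(expMeasure (1/lamb))
    = ENNReal.ofReal (1 - Real.exp (-(m * σ2) / lama) * lama / (lama + m * phi * lamb * pb)) := by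
  set A : ℝ := Real.exp (-(m * σ2) / lama) with hA
  set c : ℝ := m * phi * pb / lama with hc
  have hA1 : A ≤ 1 := by
    rw [hA, Real.exp_le_one_iff]
    have : 0 ≤ m * σ2 / lama := by positivity
    rw [neg_div]
    linarith
  have hc0 : 0 ≤ c := by positivity
  have hcong : ∀ᵐ y ∂(expMeasure (1/lamb)),
      ENNReal.ofReal (if 0 ≤ m * (phi * pb * y + σ2) then
        1 - Real.exp (-(1/lama * (m * (phi * pb * y + σ2)))) else 0)
      = ENNReal.ofReal (if 0 ≤ y then 1 - A * Real.exp (-(c*y)) else 0) := by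
    filter_upwards [expMeasure_ae_nonneg (by positivity : (0:ℝ) < 1/lamb)] with y hy
    have ht : 0 ≤ m * (phi * pb * y + σ2) := by positivity
    rw [if_pos ht, if_pos hy]
    congr 2
    rw [hA, hc, ← Real.exp_add]
    congr 1
    field_simp
    ring
  rw [lintegral_congr_ae hcong, lint_exp lamb A c hlamb hA1 hc0]
  congr 1
  rw [hc]
  have h1 : lama + m * phi * lamb * pb > 0 := by positivity
  field_simp

/-- outage probability of the Alice-to-Bob link (Lemma 2). X, Y are
independent exponentials with means λa, λb and Pb is uniform on [0, P], independent of
X and Y (realized on the product space with the product measure). -/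
theorem stmt_11 (lama lamb m phi σ2 P : ℝ)
    (hlama : 0 < lama) (hlamb : 0 < lamb) (hm : 0 < m) (hphi : 0 < phi)
    (hσ2 : 0 < σ2) (hP : 0 < P) :
    ((expMeasure (1 / lama)).prod
        ((expMeasure (1 / lamb)).prod
          ((ENNReal.ofReal P)⁻¹ • volume.restrict (Icc 0 P))))
      {p : ℝ × ℝ × ℝ | p.1 < m * (phi * p.2.2 * p.2.1 + σ2)} =
      ENNReal.ofReal (1 - lama * Real.exp (-(m * σ2) / lama) *
        (Real.log (m * phi * lamb * P + lama) - Real.log lama) / (m * phi * lamb * P)) := by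
  haveI : IsProbabilityMeasure (expMeasure (1/lama)) :=
    isProbabilityMeasure_expMeasure (by positivity)
  haveI : IsProbabilityMeasure (expMeasure (1/lamb)) :=
    isProbabilityMeasure_expMeasure (by positivity)
  haveI : IsFiniteMeasure ((ENNReal.ofReal P)⁻¹ • volume.restrict (Icc (0:ℝ) P)) := by
    refine ⟨?_⟩
    rw [Measure.smul_apply, smul_eq_mul]
    apply ENNReal.mul_lt_top
    · exact ENNReal.inv_lt_top.2 (ENNReal.ofReal_pos.2 hP)
    · rw [Measure.restrict_apply_univ]
      exact measure_Icc_lt_top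
  have hs : MeasurableSet {p : ℝ × ℝ × ℝ | p.1 < m * (phi * p.2.2 * p.2.1 + σ2)} := by
    apply measurableSet_lt measurable_fst
    fun_prop
  rw [Measure.prod_apply_symm hs]
  have key : ∀ q : ℝ × ℝ,
      expMeasure (1/lama)
        ((fun x => (x, q)) ⁻¹' {p : ℝ × ℝ × ℝ | p.1 < m * (phi * p.2.2 * p.2.1 + σ2)})
      = ENNReal.ofReal (if 0 ≤ m * (phi * q.2 * q.1 + σ2) then
          1 - Real.exp (-(1/lama * (m * (phi * q.2 * q.1 + σ2)))) else 0) := by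
    intro q
    have hpre : ((fun x => (x, q)) ⁻¹'
        {p : ℝ × ℝ × ℝ | p.1 < m * (phi * p.2.2 * p.2.1 + σ2)})
        = Iio (m * (phi * q.2 * q.1 + σ2)) := rfl
    rw [hpre, expMeasure_Iio (by positivity : (0:ℝ) < 1/lama)]
  rw [lintegral_congr key]
  have hmeasf : Measurable fun q : ℝ × ℝ =>
      ENNReal.ofReal (if 0 ≤ m * (phi * q.2 * q.1 + σ2) then
        1 - Real.exp (-(1/lama * (m * (phi * q.2 * q.1 + σ2)))) else 0) := by
    apply Measurable.ennreal_ofReal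
    apply Measurable.ite _ _ measurable_const
    · exact measurableSet_le measurable_const (by fun_prop)
    · fun_prop
  rw [lintegral_prod_symm _ hmeasf.aemeasurable]
  rw [lintegral_smul_measure]
  have hcong : ∫⁻ pb in Icc (0:ℝ) P, (∫⁻ y,
      ENNReal.ofReal (if 0 ≤ m * (phi * pb * y + σ2) then
        1 - Real.exp (-(1/lama * (m * (phi * pb * y + σ2)))) else 0)
      ∂(expMeasure (1/lamb))) ∂volume
      = ∫⁻ pb in Icc (0:ℝ) P, ENNReal.ofReal
          (1 - Real.exp (-(m * σ2) / lama) * lama / (lama + m * phi * lamb * pb)) ∂volume :=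
    setLIntegral_congr_fun_ae measurableSet_Icc (Filter.Eventually.of_forall
      fun pb hpb => inner_eval lama lamb m phi σ2 pb hlama hlamb hm hphi hσ2 hpb.1)
  rw [hcong]
  exact lint_unif P lama (m*phi*lamb) (Real.exp (-(m * σ2) / lama)) hP hlama
    (by positivity) (Real.exp_pos _).le
    (by rw [Real.exp_le_one_iff, neg_div, neg_nonpos]; positivity)
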